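/- Let n ≥ 1 be an integer with 4 ∣ n, and let α be an integer with α^n ≡ 1 (mod n). Then Σ_{i=3}^{n-1} i^(3̲) · α^(i-3) ≢ 0 (mod n). -/

import Mathlib

private lemma desc3 (i : ℕ) : (i.descFactorial 3 : ℤ) = (i : ℤ) * ((i : ℤ) - 1) * ((i : ℤ) - 2) := by
  match i with
  | 0 => norm_num [Nat.descFactorial]
  | 1 => norm_num [Nat.descFactorial]
  | 2 => norm_num [Nat.descFactorial]
  | (k+3) =>
    show (((k+1) * ((k+2) * ((k+3) * 1)) : ℕ) : ℤ) = _
    push_cast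
    ring

/-- For odd `a` and `v ≥ 1`, `2^(v+2) ∣ a^(2^v) - 1`. -/
private lemma pow_two_pow (a : ℤ) (ha : Odd a) : ∀ v : ℕ, 1 ≤ v → (2:ℤ)^(v+2) ∣ a^(2^v) - 1 := by
  intro v
  induction v with
  | zero => omega
  | succ w ih =>
    intro _
    rcases Nat.eq_zero_or_pos w with h0 | h1
    · subst h0
      obtain ⟨b, hb⟩ := ha
      obtain ⟨c, hc⟩ := Int.even_mul_succ_self b
      refine ⟨c, ?_⟩
      norm_num
      linear_combination (a + 2*b + 1) * hb + 4 * hc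
    · obtain ⟨k, hk⟩ := ih h1
      obtain ⟨m, hm⟩ := (ha.pow (n := 2^w)).add_one
      refine ⟨k * m, ?_⟩
      rw [show (2:ℕ)^(w+1) = 2^w * 2 from by ring, pow_mul]
      linear_combination (a^(2^w) + 1) * hk + (2:ℤ)^(w+2) * k * hm

/-- Base case: for odd `a`, `∑_{i<4t} i^(3̲) a^i ≡ 2t (mod 4)`. -/
private lemma base_sum (a : ℤ) (ha : Odd a) (t : ℕ) :
    (4:ℤ) ∣ (∑ i ∈ Finset.range (4*t), (i.descFactorial 3 : ℤ) * a ^ i) - 2*t := by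
  induction t with
  | zero => simp
  | succ t ih =>
    obtain ⟨k, hk⟩ := ih
    rw [show 4*(t+1) = 4*t+1+1+1+1 from by ring, Finset.sum_range_succ, Finset.sum_range_succ,
      Finset.sum_range_succ, Finset.sum_range_succ,
      desc3 (4*t), desc3 (4*t+1), desc3 (4*t+1+1), desc3 (4*t+1+1+1)]
    simp only [pow_succ]
    obtain ⟨y, hy⟩ := ha.pow (n := 4*t)
    obtain ⟨b, hb⟩ := ha
    rw [hy]
    rw [hb] at hk ⊢
    push_cast
    push_cast at hk
    refine ⟨k + (1 + 9*b + 18*b^2 + 12*b^3 + 3*y + 18*y*b + 36*y*b^2 + 24*y*b^3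
      + 14*(t:ℤ) + 72*t*b + 140*t*b^2 + 88*t*b^3 + 28*t*y + 144*t*y*b + 280*t*y*b^2
      + 176*t*y*b^3 + 24*t^2 + 192*t^2*b + 336*t^2*b^2 + 192*t^2*b^3 + 48*t^2*y
      + 384*t^2*y*b + 672*t^2*y*b^2 + 384*t^2*y*b^3 + 64*t^3 + 192*t^3*b + 256*t^3*b^2
      + 128*t^3*b^3 + 128*t^3*y + 384*t^3*y*b + 512*t^3*y*b^2 + 256*t^3*y*b^3), ?_⟩
    linear_combination hk


/-- Step blocks: with `m = 2^(w+2) t` and `a^m ≡ 1 (mod 2^(w+4))`,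
the shifted sum agrees with the original mod `2^(w+3)`, in blocks of 4. -/
private lemma blocks (w t : ℕ) (a : ℤ) (ha : Odd a)
    (hA : (2:ℤ)^(w+4) ∣ a^(2^(w+2)*t) - 1) :
    ∀ u : ℕ, (2:ℤ)^(w+3) ∣ ∑ i ∈ Finset.range (4*u),
      ((Nat.descFactorial (2^(w+2)*t + i) 3 : ℤ) * a^(2^(w+2)*t + i)
        - (Nat.descFactorial i 3 : ℤ) * a^i) := by
  intro u
  induction u with
  | zero => simp
  | succ u ih =>
    obtain ⟨k, hk⟩ := ih
    obtain ⟨c, hc⟩ := hA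
    rw [show 4*(u+1) = 4*u+1+1+1+1 from by ring, Finset.sum_range_succ, Finset.sum_range_succ,
      Finset.sum_range_succ, Finset.sum_range_succ]
    simp only [desc3, pow_add, pow_succ, pow_one] at hk ⊢
    push_cast at hk ⊢
    have hE : Even ((48*(u:ℤ)^2-24*u+2) + (48*(u:ℤ)^2-1)*a + (48*(u:ℤ)^2+24*u+2)*a^2
        + (48*(u:ℤ)^2+48*u+11)*a^3) := by
      obtain ⟨p, hp⟩ := Odd.mul (⟨24*(u:ℤ)^2-1, by ring⟩ : Odd (48*(u:ℤ)^2-1)) ha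
      obtain ⟨q, hq⟩ := Odd.mul (⟨24*(u:ℤ)^2+24*u+5, by ring⟩ : Odd (48*(u:ℤ)^2+48*u+11))
        (ha.pow (n := 3))
      exact ⟨(24*(u:ℤ)^2-12*u+1) + p + (24*(u:ℤ)^2+12*u+1)*a^2 + q + 1,
        by linear_combination hp + hq⟩
    obtain ⟨r, hr⟩ := hE
    -- abbreviations (as plain terms)
    refine ⟨k + 2*c*(a^(4*u) * ((((2:ℤ)^(w+2)*t + 4*u) * (((2:ℤ)^(w+2)*t + 4*u) - 1) * (((2:ℤ)^(w+2)*t + 4*u) - 2)) + (((2:ℤ)^(w+2)*t + 4*u+1) * (((2:ℤ)^(w+2)*t + 4*u+1) - 1) * (((2:ℤ)^(w+2)*t + 4*u+1) - 2)) * a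
        + (((2:ℤ)^(w+2)*t + 4*u+2) * (((2:ℤ)^(w+2)*t + 4*u+2) - 1) * (((2:ℤ)^(w+2)*t + 4*u+2) - 2)) * a^2 + (((2:ℤ)^(w+2)*t + 4*u+3) * (((2:ℤ)^(w+2)*t + 4*u+3) - 1) * (((2:ℤ)^(w+2)*t + 4*u+3) - 2)) * a^3))
      + (t:ℤ)*(a^(4*u))*r
      + 2^(w+1)*(t:ℤ)^2*(a^(4*u))*((3*(4*(u:ℤ)-1) + 2^(w+2)*t) + (3*(4*(u:ℤ)) + 2^(w+2)*t)*a
        + (3*(4*(u:ℤ)+1) + 2^(w+2)*t)*a^2 + (3*(4*(u:ℤ)+2) + 2^(w+2)*t)*a^3), ?_⟩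
    linear_combination hk
      + (a^(4*u) * ((((2:ℤ)^(w+2)*t + 4*u) * (((2:ℤ)^(w+2)*t + 4*u) - 1) * (((2:ℤ)^(w+2)*t + 4*u) - 2)) + (((2:ℤ)^(w+2)*t + 4*u+1) * (((2:ℤ)^(w+2)*t + 4*u+1) - 1) * (((2:ℤ)^(w+2)*t + 4*u+1) - 2)) * a
        + (((2:ℤ)^(w+2)*t + 4*u+2) * (((2:ℤ)^(w+2)*t + 4*u+2) - 1) * (((2:ℤ)^(w+2)*t + 4*u+2) - 2)) * a^2 + (((2:ℤ)^(w+2)*t + 4*u+3) * (((2:ℤ)^(w+2)*t + 4*u+3) - 1) * (((2:ℤ)^(w+2)*t + 4*u+3) - 2)) * a^3)) * hc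
      + (2:ℤ)^(w+2)*(t:ℤ)*(a^(4*u)) * hr

/-- Key lemma: for odd `a`, odd `t`: `∑_{i<2^(w+2) t} i^(3̲) a^i ≡ 2^(w+1) (mod 2^(w+2))`. -/
private lemma key (a : ℤ) (ha : Odd a) :
    ∀ w t : ℕ, Odd t →
      (2:ℤ)^(w+2) ∣ (∑ i ∈ Finset.range (2^(w+2)*t), (i.descFactorial 3 : ℤ) * a ^ i)
        - 2^(w+1) := by
  intro w
  induction w with
  | zero =>
    intro t ht
    obtain ⟨k, hk⟩ := base_sum a ha t
    obtain ⟨s, hs⟩ := ht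
    have hs' : (t:ℤ) = 2*s+1 := by exact_mod_cast hs
    exact ⟨k + s, by linear_combination hk + 2*hs'⟩
  | succ w ih =>
    intro t ht
    obtain ⟨k, hk⟩ := ih t ht
    have hA : (2:ℤ)^(w+4) ∣ a^(2^(w+2)*t) - 1 := by
      have h1 : (2:ℤ)^(w+4) ∣ a^(2^(w+2)) - 1 := by
        have := pow_two_pow a ha (w+2) (by omega)
        rwa [show w+2+2 = w+4 from by ring] at this
      have h2 : a^(2^(w+2)) - 1 ∣ a^(2^(w+2)*t) - 1 := by
        rw [pow_mul]
        simpa using sub_dvd_pow_sub_pow (a^(2^(w+2))) 1 t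
      exact h1.trans h2
    obtain ⟨K, hK⟩ := blocks w t a ha hA (2^w*t)
    rw [Finset.sum_sub_distrib] at hK
    rw [show 2^(w+1+2)*t = 2^(w+2)*t + 4*(2^w*t) from by ring, Finset.sum_range_add]
    rw [show 2^(w+2)*t = 4*(2^w*t) from by ring] at hK hk ⊢
    exact ⟨K + k, by linear_combination hK + 2*hk⟩

theorem sum_descFactorial_three_mul_pow_not_modEq_zero
    (n : ℕ) (hn : 1 ≤ n) (h4 : 4 ∣ n) (α : ℤ) (hα : α ^ n ≡ 1 [ZMOD (n : ℤ)]) :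
    ¬ ((∑ i ∈ Finset.Ico 3 n, (i.descFactorial 3 : ℤ) * α ^ (i - 3)) ≡ 0 [ZMOD (n : ℤ)]) := by
  intro hcon
  have hn0 : n ≠ 0 := by omega
  have hn4 : 4 ≤ n := by
    obtain ⟨q, hq⟩ := h4; omega
  -- α is odd
  have h2n : (2:ℤ) ∣ (n:ℤ) := by
    obtain ⟨q, hq⟩ := h4
    exact ⟨2*q, by push_cast [hq]; ring⟩
  have hαodd : Odd α := by
    have hd : (2:ℤ) ∣ 1 - α ^ n := h2n.trans hα.dvd
    have he : Even (1 - α ^ n) := by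
      obtain ⟨d, hd2⟩ := hd
      exact ⟨d, by linarith⟩
    have ho : Odd (α ^ n) := by
      rcases Int.even_or_odd (α ^ n) with h | h
      · exfalso
        have : Even ((1:ℤ) - α ^ n) ↔ (Even (1:ℤ) ↔ Even (α ^ n)) := Int.even_sub
        have h1 : Even (1:ℤ) := (this.1 he).2 h
        norm_num at h1
      · exact h
    exact (Int.odd_pow' hn0).1 ho
  -- 2-adic decomposition of n
  have hv2 : 2 ≤ n.factorization 2 := by
    refine (Nat.Prime.pow_dvd_iff_le_factorization Nat.prime_two hn0).1 ?_
    have : (2:ℕ)^2 = 4 := by norm_num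
    rw [this]; exact h4
  obtain ⟨w, hw⟩ : ∃ w, n.factorization 2 = w + 2 := ⟨n.factorization 2 - 2, by omega⟩
  have hdvd : 2^(w+2) ∣ n := hw ▸ Nat.ordProj_dvd n 2
  obtain ⟨t, ht⟩ := hdvd
  have htodd : Odd t := by
    have hnd := Nat.not_dvd_ordCompl Nat.prime_two hn0
    have htq : t = ordCompl[2] n := by
      rw [hw, ht, Nat.mul_div_cancel_left _ (Nat.pow_pos (by norm_num))]
    rw [← htq] at hnd
    exact Nat.odd_iff.2 (by omega)
  -- the full sum equals α^3 times the given sum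
  set T := ∑ i ∈ Finset.Ico 3 n, (i.descFactorial 3 : ℤ) * α ^ (i - 3) with hT
  have hsplit : ∑ i ∈ Finset.range n, (i.descFactorial 3 : ℤ) * α ^ i = α ^ 3 * T := by
    rw [Finset.range_eq_Ico, ← Finset.sum_Ico_consecutive _ (by omega : 0 ≤ 3) (by omega : 3 ≤ n)]
    have h1 : ∑ i ∈ Finset.Ico 0 3, (i.descFactorial 3 : ℤ) * α ^ i = 0 := by
      refine Finset.sum_eq_zero fun i hi => ?_
      have : i < 3 := (Finset.mem_Ico.1 hi).2
      rw [(Nat.descFactorial_eq_zero_iff_lt).2 this]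
      norm_num
    rw [h1, zero_add, hT, Finset.mul_sum]
    refine Finset.sum_congr rfl fun i hi => ?_
    have h3 : 3 ≤ i := (Finset.mem_Ico.1 hi).1
    calc (i.descFactorial 3 : ℤ) * α ^ i
        = (i.descFactorial 3 : ℤ) * α ^ (3 + (i - 3)) := by rw [show 3 + (i-3) = i from by omega]
      _ = α ^ 3 * ((i.descFactorial 3 : ℤ) * α ^ (i - 3)) := by rw [pow_add]; ring
  -- divisibilities
  have hTd : (n:ℤ) ∣ T := by
    have := hcon.dvd
    rw [zero_sub] at this
    exact dvd_neg.1 this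
  have h2vn : ((2:ℤ))^(w+2) ∣ (n:ℤ) := by
    have : ((2^(w+2)*t : ℕ) : ℤ) = (n:ℤ) := by rw [← ht]
    refine ⟨(t:ℤ), ?_⟩
    push_cast at this
    linarith [this]
  have hSd : (2:ℤ)^(w+2) ∣ ∑ i ∈ Finset.range n, (i.descFactorial 3 : ℤ) * α ^ i := by
    rw [hsplit]
    exact Dvd.dvd.mul_left (h2vn.trans hTd) _
  have hkey := key α hαodd w t htodd
  rw [← ht] at hkey
  have hfin : (2:ℤ)^(w+2) ∣ 2^(w+1) := by
    have := dvd_sub hSd hkey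
    simpa using this
  have hp : (0:ℤ) < 2^(w+1) := by positivity
  have hle := Int.le_of_dvd hp hfin
  have h2 : (2:ℤ)^(w+2) = 2*2^(w+1) := by ring
  linarith
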